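/- Theorem 1: Let σ be L-Lipschitz, à symmetric with nonnegative entries, and let h_i = σ(Σ_j Ã_ij c_j) with ||c_j||_∞ ≤ δ. Suppose the group-averaged differences d_j := (1/s)Σ_{i∈S_k}Ã_ij - (1/(N-s))Σ_{i∉S_k}Ã_ij satisfy d_j ≥ 0 for j ∈ S_k and d_j ≤ 0 for j ∉ S_k, and that each aggregated vector z_i = Σ_j Ã_ij c_j deviates from the overall mean of the z's by at most Δ_z in sup-norm. Then ||(1/s) Σ_{i∈S_k} h_i - (1/(N-s)) Σ_{i∉S_k} h_i||_2 ≤ L( δ√F ( |p_ω/s - p_χ/(N-s)| + |(T - p_ω - 2p_χ)/(N-s) - p_χ/s| ) + 2√N Δ_z ). -/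

import Mathlib

open Finset

/-- Theorem 1: disparity of mean GNN-layer outputs between a
sensitive group `S` (size `s`) and its complement is bounded by
`L(δ√F(α₁ + α₂) + 2√N Δ_z)`. -/
theorem theorem_fairwire (N F : ℕ)
    (σ : ℝ → ℝ) (L : ℝ) (hL : 0 ≤ L)
    (hσ : ∀ x y : ℝ, |σ x - σ y| ≤ L * |x - y|)
    (A : Matrix (Fin N) (Fin N) ℝ)
    (hsymm : A.IsSymm) (hnonneg : ∀ i j, 0 ≤ A i j)
    (S : Finset (Fin N)) (hS : S.Nonempty) (hS' : S ≠ Finset.univ)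
    (c : Fin N → EuclideanSpace ℝ (Fin F)) (δ : ℝ)
    (hc : ∀ j f, |c j f| ≤ δ)
    -- aggregated representations z i = ∑ j, A i j • c j
    (z : Fin N → EuclideanSpace ℝ (Fin F))
    (hz : ∀ i, z i = ∑ j, A i j • c j)
    -- layer outputs h i = σ applied coordinatewise to z i
    (h : Fin N → EuclideanSpace ℝ (Fin F))
    (hh : ∀ i f, h i f = σ (z i f))
    -- sign conditions on the group-averaged differences (Assumptions A2, A3)
    (hsign_in : ∀ j ∈ S,
      0 ≤ (S.card : ℝ)⁻¹ * ∑ i ∈ S, A i j - ((N : ℝ) - S.card)⁻¹ * ∑ i ∈ Sᶜ, A i j)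
    (hsign_out : ∀ j ∈ Sᶜ,
      (S.card : ℝ)⁻¹ * ∑ i ∈ S, A i j - ((N : ℝ) - S.card)⁻¹ * ∑ i ∈ Sᶜ, A i j ≤ 0)
    -- deviation of each z i from the overall mean of the z's, in sup-norm
    (Δz : ℝ)
    (hΔ : ∀ i f, |z i f - ((N : ℝ)⁻¹ • ∑ i', z i') f| ≤ Δz)
    -- Lipschitz-plus-mean-deviation lemma (Lemma A.1)
    (hlem : ‖((S.card : ℝ)⁻¹ • ∑ i ∈ S, h i) - (((N : ℝ) - S.card)⁻¹ • ∑ i ∈ Sᶜ, h i)‖ ≤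
      L * ‖((S.card : ℝ)⁻¹ • ∑ i ∈ S, z i) - (((N : ℝ) - S.card)⁻¹ • ∑ i ∈ Sᶜ, z i)‖ +
        2 * L * Real.sqrt N * Δz) :
    ‖((S.card : ℝ)⁻¹ • ∑ i ∈ S, h i) - (((N : ℝ) - S.card)⁻¹ • ∑ i ∈ Sᶜ, h i)‖ ≤
      L * (δ * Real.sqrt F *
          (|(∑ i ∈ S, ∑ j ∈ S, A i j) / (S.card : ℝ) -
              (∑ i ∈ S, ∑ j ∈ Sᶜ, A i j) / ((N : ℝ) - S.card)| +
            |((∑ i, ∑ j, A i j) - (∑ i ∈ S, ∑ j ∈ S, A i j) -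
                  2 * (∑ i ∈ S, ∑ j ∈ Sᶜ, A i j)) / ((N : ℝ) - S.card) -
              (∑ i ∈ S, ∑ j ∈ Sᶜ, A i j) / (S.card : ℝ)|) +
        2 * Real.sqrt N * Δz) := by
  classical
  set s : ℝ := (S.card : ℝ) with hs
  set t : ℝ := (N : ℝ) - S.card with ht
  set d : Fin N → ℝ := fun j => s⁻¹ * ∑ i ∈ S, A i j - t⁻¹ * ∑ i ∈ Sᶜ, A i j with hd
  have hAsym : ∀ i j, A i j = A j i := fun i j => hsymm.apply j i
  -- cross sums are equal
  have hcross : ∑ j ∈ S, ∑ i ∈ Sᶜ, A i j = ∑ i ∈ S, ∑ j ∈ Sᶜ, A i j :=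
    Finset.sum_congr rfl fun j _ => Finset.sum_congr rfl fun i _ => (hAsym i j)
  have hcross2 : ∑ i ∈ Sᶜ, ∑ j ∈ S, A i j = ∑ i ∈ S, ∑ j ∈ Sᶜ, A i j := by
    exact Finset.sum_comm.trans hcross
  have hinin : ∑ j ∈ S, ∑ i ∈ S, A i j = ∑ i ∈ S, ∑ j ∈ S, A i j := Finset.sum_comm
  have houtout : ∑ i ∈ Sᶜ, ∑ j ∈ Sᶜ, A i j =
      (∑ i, ∑ j, A i j) - (∑ i ∈ S, ∑ j ∈ S, A i j) - 2 * (∑ i ∈ S, ∑ j ∈ Sᶜ, A i j) := by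
    have h1 : ∑ i, ∑ j, A i j =
        (∑ i ∈ S, ∑ j, A i j) + (∑ i ∈ Sᶜ, ∑ j, A i j) :=
      (Finset.sum_add_sum_compl S _).symm
    have h2 : ∀ (T : Finset (Fin N)), ∑ i ∈ T, ∑ j, A i j =
        (∑ i ∈ T, ∑ j ∈ S, A i j) + (∑ i ∈ T, ∑ j ∈ Sᶜ, A i j) := by
      intro T
      rw [← Finset.sum_add_distrib]
      exact Finset.sum_congr rfl fun i _ => (Finset.sum_add_sum_compl S _).symm
    rw [h1, h2, h2, hcross2] at *
    linarith
  -- sum of |d j|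
  set B : ℝ := |(∑ i ∈ S, ∑ j ∈ S, A i j) / s - (∑ i ∈ S, ∑ j ∈ Sᶜ, A i j) / t| +
      |((∑ i, ∑ j, A i j) - (∑ i ∈ S, ∑ j ∈ S, A i j) -
          2 * (∑ i ∈ S, ∑ j ∈ Sᶜ, A i j)) / t - (∑ i ∈ S, ∑ j ∈ Sᶜ, A i j) / s| with hB
  have hdsum : ∑ j, |d j| ≤ B := by
    have hsplit : ∑ j, |d j| = ∑ j ∈ S, |d j| + ∑ j ∈ Sᶜ, |d j| :=
      (Finset.sum_add_sum_compl S _).symm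
    have hin : ∑ j ∈ S, |d j| = ∑ j ∈ S, d j :=
      Finset.sum_congr rfl fun j hj => abs_of_nonneg (hsign_in j hj)
    have hout : ∑ j ∈ Sᶜ, |d j| = ∑ j ∈ Sᶜ, (- d j) :=
      Finset.sum_congr rfl fun j hj => abs_of_nonpos (hsign_out j hj)
    have e1 : ∑ j ∈ S, d j =
        (∑ i ∈ S, ∑ j ∈ S, A i j) / s - (∑ i ∈ S, ∑ j ∈ Sᶜ, A i j) / t := by
      simp only [hd, Finset.sum_sub_distrib, ← Finset.mul_sum]
      rw [hinin, hcross]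
      ring
    have e2 : ∑ j ∈ Sᶜ, (- d j) =
        ((∑ i, ∑ j, A i j) - (∑ i ∈ S, ∑ j ∈ S, A i j) -
          2 * (∑ i ∈ S, ∑ j ∈ Sᶜ, A i j)) / t - (∑ i ∈ S, ∑ j ∈ Sᶜ, A i j) / s := by
      have : ∑ j ∈ Sᶜ, (- d j) =
          t⁻¹ * (∑ j ∈ Sᶜ, ∑ i ∈ Sᶜ, A i j) - s⁻¹ * (∑ j ∈ Sᶜ, ∑ i ∈ S, A i j) := by
        simp only [hd, neg_sub, Finset.sum_sub_distrib, ← Finset.mul_sum]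
      rw [this, Finset.sum_comm (s := Sᶜ) (t := Sᶜ), houtout,
        Finset.sum_comm (s := Sᶜ) (t := S)]
      ring
    rw [hsplit, hin, hout, e1, e2, hB]
    exact add_le_add (le_abs_self _) (le_abs_self _)
  have hBnn : 0 ≤ B := by positivity
  -- coordinatewise formula for the z-difference
  have hcoord : ∀ f, ((s⁻¹ • ∑ i ∈ S, z i) - (t⁻¹ • ∑ i ∈ Sᶜ, z i)) f = ∑ j, d j * c j f := by
    intro f
    have h1 : ∀ (T : Finset (Fin N)), (∑ i ∈ T, z i) f = ∑ j, (∑ i ∈ T, A i j) * c j f := by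
      intro T
      rw [WithLp.ofLp_sum, Finset.sum_apply]
      have : ∀ i ∈ T, z i f = ∑ j, A i j * c j f := by
        intro i _
        rw [hz i, WithLp.ofLp_sum, Finset.sum_apply]
        rfl
      rw [Finset.sum_congr rfl this, Finset.sum_comm]
      exact Finset.sum_congr rfl fun j _ => (Finset.sum_mul _ _ _).symm
    have : ((s⁻¹ • ∑ i ∈ S, z i) - (t⁻¹ • ∑ i ∈ Sᶜ, z i)) f
        = s⁻¹ * (∑ i ∈ S, z i) f - t⁻¹ * (∑ i ∈ Sᶜ, z i) f := rfl
    rw [this, h1, h1, Finset.mul_sum, Finset.mul_sum, ← Finset.sum_sub_distrib]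
    exact Finset.sum_congr rfl fun j _ => by simp only [hd]; ring
  -- bound on the z-difference norm
  have hznorm : ‖(s⁻¹ • ∑ i ∈ S, z i) - (t⁻¹ • ∑ i ∈ Sᶜ, z i)‖ ≤ δ * Real.sqrt F * B := by
    rcases Nat.eq_zero_or_pos F with hF | hF
    · subst hF
      have : ((s⁻¹ • ∑ i ∈ S, z i) - (t⁻¹ • ∑ i ∈ Sᶜ, z i)) = 0 := by
        ext f; exact absurd f.2 (by simp)
      rw [this, norm_zero]
      simp
    · have hδ : 0 ≤ δ := le_trans (abs_nonneg _) (hc (hS.choose) ⟨0, hF⟩)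
      have hM : 0 ≤ δ * B := mul_nonneg hδ hBnn
      have hcb : ∀ f, |((s⁻¹ • ∑ i ∈ S, z i) - (t⁻¹ • ∑ i ∈ Sᶜ, z i)) f| ≤ δ * B := by
        intro f
        rw [hcoord f]
        calc |∑ j, d j * c j f| ≤ ∑ j, |d j * c j f| := Finset.abs_sum_le_sum_abs _ _
          _ ≤ ∑ j, |d j| * δ := by
              refine Finset.sum_le_sum fun j _ => ?_
              rw [abs_mul]
              exact mul_le_mul_of_nonneg_left (hc j f) (abs_nonneg _)
          _ = (∑ j, |d j|) * δ := (Finset.sum_mul _ _ _).symm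
          _ ≤ B * δ := mul_le_mul_of_nonneg_right hdsum hδ
          _ = δ * B := mul_comm _ _
      rw [EuclideanSpace.norm_eq]
      have hsq : ∑ f : Fin F, ‖((s⁻¹ • ∑ i ∈ S, z i) - (t⁻¹ • ∑ i ∈ Sᶜ, z i)) f‖ ^ 2
          ≤ (F : ℝ) * (δ * B) ^ 2 := by
        calc ∑ f : Fin F, ‖((s⁻¹ • ∑ i ∈ S, z i) - (t⁻¹ • ∑ i ∈ Sᶜ, z i)) f‖ ^ 2
            ≤ ∑ _f : Fin F, (δ * B) ^ 2 := by
              refine Finset.sum_le_sum fun f _ => ?_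
              rw [Real.norm_eq_abs, ← sq_abs (δ * B)]
              exact pow_le_pow_left₀ (abs_nonneg _) (le_trans (hcb f) (le_abs_self _)) 2
          _ = (F : ℝ) * (δ * B) ^ 2 := by simp [mul_comm]
      calc Real.sqrt (∑ f : Fin F, ‖((s⁻¹ • ∑ i ∈ S, z i) - (t⁻¹ • ∑ i ∈ Sᶜ, z i)) f‖ ^ 2)
          ≤ Real.sqrt ((F : ℝ) * (δ * B) ^ 2) := Real.sqrt_le_sqrt hsq
        _ = Real.sqrt F * (δ * B) := by
            rw [Real.sqrt_mul (Nat.cast_nonneg F), Real.sqrt_sq hM]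
        _ = δ * Real.sqrt F * B := by ring
  calc ‖((S.card : ℝ)⁻¹ • ∑ i ∈ S, h i) - (((N : ℝ) - S.card)⁻¹ • ∑ i ∈ Sᶜ, h i)‖
      ≤ L * ‖(s⁻¹ • ∑ i ∈ S, z i) - (t⁻¹ • ∑ i ∈ Sᶜ, z i)‖ + 2 * L * Real.sqrt N * Δz := hlem
    _ ≤ L * (δ * Real.sqrt F * B) + 2 * L * Real.sqrt N * Δz :=
        add_le_add_left (mul_le_mul_of_nonneg_left hznorm hL) _
    _ = L * (δ * Real.sqrt F * B + 2 * Real.sqrt N * Δz) := by ring
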